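/- arXiv:2505.10871 — 4 statements merged into one kernel-verified Lean document; each statement's English description precedes it below -/
import Mathlib

section
/- Let N ≥ 0 and ε > 0. If Z is Laplace-distributed with location N and scale 1/ε, then E[max(0, Z)] = N + (1/(2ε))·exp(−εN). Consequently the bias E[max(0,Z)] − N = exp(−εN)/(2ε) is strictly positive. -/
open Real MeasureTheory Set Filter

/-- The Laplace density with location `N` and scale `1/ε`. -/
noncomputable def laplaceDensity (ε N z : ℝ) : ℝ := ε / 2 * Real.exp (-ε * |z - N|)

theorem bias_truncated_laplace (N ε : ℝ) (hN : 0 ≤ N) (hε : 0 < ε) :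
    (∫ z : ℝ, max 0 z * laplaceDensity ε N z) = N + 1 / (2 * ε) * Real.exp (-ε * N) ∧
    (∫ z : ℝ, max 0 z * laplaceDensity ε N z) - N = Real.exp (-ε * N) / (2 * ε) ∧
    0 < Real.exp (-ε * N) / (2 * ε) := by
  have hεne : ε ≠ 0 := hε.ne'
  set c : ℝ := ε / 2 with hc
  -- antiderivative on [N, ∞)
  set F : ℝ → ℝ := fun z => -(c * Real.exp (ε * N)) * ((z / ε + 1 / ε ^ 2) * Real.exp (-ε * z))
    with hF
  have hFderiv : ∀ z : ℝ, HasDerivAt F (c * Real.exp (ε * N) * (z * Real.exp (-ε * z))) z := by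
    intro z
    have h1 : HasDerivAt (fun z : ℝ => z / ε + 1 / ε ^ 2) (1 / ε) z :=
      ((hasDerivAt_id z).div_const ε).add_const _
    have h2 : HasDerivAt (fun z : ℝ => Real.exp (-ε * z)) (Real.exp (-ε * z) * (-ε)) z := by
      simpa using ((hasDerivAt_id z).const_mul (-ε)).exp
    have h3 := (h1.mul h2).const_mul (-(c * Real.exp (ε * N)))
    convert h3 using 1
    · rfl
    · rfl
    · rfl
    field_simp
    ring
  have hFtend : Tendsto F atTop (nhds 0) := by
    have h0 : Tendsto (fun u : ℝ => u * Real.exp (-u) + Real.exp (-u)) atTop (nhds 0) := by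
      have := tendsto_pow_mul_exp_neg_atTop_nhds_zero 1
      simpa using this.add (tendsto_exp_neg_atTop_nhds_zero)
    have hcomp : Tendsto (fun z : ℝ => ε * z) atTop atTop :=
      Tendsto.const_mul_atTop hε tendsto_id
    have h1 : Tendsto (fun z : ℝ => (ε * z) * Real.exp (-(ε * z)) + Real.exp (-(ε * z)))
        atTop (nhds 0) := h0.comp hcomp
    have h2 := h1.const_mul (-(c * Real.exp (ε * N)) * (1 / ε ^ 2))
    rw [mul_zero] at h2
    refine h2.congr fun z => ?_
    show _ = -(c * Real.exp (ε * N)) * ((z / ε + 1 / ε ^ 2) * Real.exp (-ε * z))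
    rw [show -ε * z = -(ε * z) from by ring]
    field_simp
  -- antiderivative on [0, N]
  set G : ℝ → ℝ := fun z => c * Real.exp (-ε * N) * ((z / ε - 1 / ε ^ 2) * Real.exp (ε * z))
    with hG
  have hGderiv : ∀ z : ℝ, HasDerivAt G (c * Real.exp (-ε * N) * (z * Real.exp (ε * z))) z := by
    intro z
    have h1 : HasDerivAt (fun z : ℝ => z / ε - 1 / ε ^ 2) (1 / ε) z :=
      ((hasDerivAt_id z).div_const ε).sub_const _
    have h2 : HasDerivAt (fun z : ℝ => Real.exp (ε * z)) (Real.exp (ε * z) * ε) z := by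
      simpa using ((hasDerivAt_id z).const_mul ε).exp
    have h3 := (h1.mul h2).const_mul (c * Real.exp (-ε * N))
    convert h3 using 1
    · rfl
    · rfl
    · rfl
    field_simp
    ring
  -- Step 1: reduce to an integral over Ioi 0
  have step1 : (∫ z : ℝ, max 0 z * laplaceDensity ε N z)
      = ∫ z in Ioi (0:ℝ), z * laplaceDensity ε N z := by
    rw [← integral_indicator measurableSet_Ioi]
    congr 1
    funext z
    by_cases hz : 0 < z
    · rw [indicator_of_mem (mem_Ioi.mpr hz), max_eq_right hz.le]
    · rw [indicator_of_notMem (fun h => hz (mem_Ioi.mp h)), max_eq_left (not_lt.mp hz),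
        zero_mul]
  -- the integrand agrees with nicer functions on the pieces
  have eqIoc : ∀ z ∈ Ioc (0:ℝ) N, z * laplaceDensity ε N z
      = c * Real.exp (-ε * N) * (z * Real.exp (ε * z)) := by
    intro z hz
    have : |z - N| = N - z := by rw [abs_of_nonpos (by linarith [hz.2])]; ring
    rw [laplaceDensity, this, show -ε * (N - z) = -ε * N + ε * z by ring, Real.exp_add]
    ring
  have eqIoi : ∀ z ∈ Ioi N, z * laplaceDensity ε N z
      = c * Real.exp (ε * N) * (z * Real.exp (-ε * z)) := by
    intro z hz
    have : |z - N| = z - N := abs_of_nonneg (by linarith [mem_Ioi.mp hz])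
    rw [laplaceDensity, this, show -ε * (z - N) = ε * N + -ε * z by ring, Real.exp_add]
    ring
  -- integral over Ioi N
  have intIoi : (∫ z in Ioi N, z * laplaceDensity ε N z) = 0 - F N := by
    rw [setIntegral_congr_fun measurableSet_Ioi eqIoi]
    exact integral_Ioi_of_hasDerivAt_of_nonneg' (fun x _ => hFderiv x)
      (fun x hx => by
        have hx' : 0 < x := lt_of_le_of_lt hN (mem_Ioi.mp hx)
        positivity)
      hFtend
  have intableIoi : IntegrableOn (fun z => z * laplaceDensity ε N z) (Ioi N) := by
    refine (integrableOn_Ioi_deriv_of_nonneg' (fun x _ => hFderiv x)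
      (fun x hx => by
        have hx' : 0 < x := lt_of_le_of_lt hN (mem_Ioi.mp hx)
        positivity)
      hFtend).congr_fun (fun z hz => (eqIoi z hz).symm) measurableSet_Ioi
  -- continuity of the integrand
  have hcont : Continuous (fun z : ℝ => z * laplaceDensity ε N z) := by
    unfold laplaceDensity
    fun_prop
  have intableIoc : IntegrableOn (fun z => z * laplaceDensity ε N z) (Ioc 0 N) :=
    hcont.integrableOn_Ioc
  -- integral over Ioc 0 N
  have intIoc : (∫ z in Ioc (0:ℝ) N, z * laplaceDensity ε N z) = G N - G 0 := by
    rw [setIntegral_congr_fun measurableSet_Ioc eqIoc, ← intervalIntegral.integral_of_le hN]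
    exact intervalIntegral.integral_eq_sub_of_hasDerivAt (fun x _ => hGderiv x)
      (Continuous.intervalIntegrable (by fun_prop) 0 N)
  -- combine
  have split : (∫ z in Ioi (0:ℝ), z * laplaceDensity ε N z)
      = (∫ z in Ioc (0:ℝ) N, z * laplaceDensity ε N z)
        + ∫ z in Ioi N, z * laplaceDensity ε N z := by
    rw [← Ioc_union_Ioi_eq_Ioi hN]
    exact setIntegral_union (Ioc_disjoint_Ioi le_rfl) measurableSet_Ioi intableIoc intableIoi
  have hexp : Real.exp (-ε * N) * Real.exp (ε * N) = 1 := by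
    rw [← Real.exp_add]; simp
  have key : (∫ z : ℝ, max 0 z * laplaceDensity ε N z)
      = N + 1 / (2 * ε) * Real.exp (-ε * N) := by
    have hA : Real.exp (ε * N) = (Real.exp (-ε * N))⁻¹ := by
      rw [← Real.exp_neg]; congr 1; ring
    rw [step1, split, intIoc, intIoi, hF, hG, hc]
    simp only [hA]
    field_simp
    ring_nf
    simp
  refine ⟨key, ?_, by positivity⟩
  rw [key]; ring
end

section
/- Let N ≥ 0 and ε > 0, and let Z be Laplace-distributed with location N and scale 1/ε. Then the second moment of Ñ = max(0, Z) satisfies E[Ñ²] = (1/ε²)·(ε²N² + 2 − exp(−εN)). -/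
open Real MeasureTheory Set Filter

private lemma deriv_aux1 (ε : ℝ) (hε : ε ≠ 0) (z : ℝ) :
    HasDerivAt (fun z : ℝ => Real.exp (ε * z) * (z ^ 2 / ε - 2 * z / ε ^ 2 + 2 / ε ^ 3))
      (z ^ 2 * Real.exp (ε * z)) z := by
  have h1 : HasDerivAt (fun z : ℝ => ε * z) ε z := by
    simpa using (hasDerivAt_id z).const_mul ε
  have h2 : HasDerivAt (fun z : ℝ => Real.exp (ε * z)) (Real.exp (ε * z) * ε) z := h1.exp
  have hp : HasDerivAt (fun z : ℝ => z ^ 2 / ε - 2 * z / ε ^ 2 + 2 / ε ^ 3)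
      (2 * z / ε - 2 / ε ^ 2) z := by
    have := (((hasDerivAt_pow 2 z).div_const ε).sub
      (((hasDerivAt_id z).const_mul 2).div_const (ε ^ 2))).add_const (2 / ε ^ 3)
    exact this.congr_deriv (by simp)
  have := h2.mul hp
  exact this.congr_deriv (by field_simp; ring)

private lemma deriv_aux2 (ε : ℝ) (hε : ε ≠ 0) (z : ℝ) :
    HasDerivAt (fun z : ℝ => -Real.exp (-(ε * z)) * (z ^ 2 / ε + 2 * z / ε ^ 2 + 2 / ε ^ 3))
      (z ^ 2 * Real.exp (-(ε * z))) z := by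
  have h1 : HasDerivAt (fun z : ℝ => -(ε * z)) (-ε) z := by
    simpa [Pi.neg_def] using ((hasDerivAt_id z).const_mul ε).neg
  have h2 : HasDerivAt (fun z : ℝ => Real.exp (-(ε * z))) (Real.exp (-(ε * z)) * (-ε)) z := h1.exp
  have hp : HasDerivAt (fun z : ℝ => z ^ 2 / ε + 2 * z / ε ^ 2 + 2 / ε ^ 3)
      (2 * z / ε + 2 / ε ^ 2) z := by
    have := (((hasDerivAt_pow 2 z).div_const ε).add
      (((hasDerivAt_id z).const_mul 2).div_const (ε ^ 2))).add_const (2 / ε ^ 3)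
    exact this.congr_deriv (by simp)
  have := (h2.neg.mul hp)
  exact this.congr_deriv (by simp only [Pi.neg_apply]; field_simp; ring)

private lemma tendsto_aux (ε : ℝ) (hε : 0 < ε) :
    Tendsto (fun z : ℝ => -Real.exp (-(ε * z)) * (z ^ 2 / ε + 2 * z / ε ^ 2 + 2 / ε ^ 3))
      atTop (nhds 0) := by
  have key : ∀ k : ℕ, Tendsto (fun z : ℝ => z ^ k * Real.exp (-(ε * z))) atTop (nhds 0) := by
    intro k
    have h := (Real.tendsto_pow_mul_exp_neg_atTop_nhds_zero k).comp
      (tendsto_id.const_mul_atTop hε)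
    have h2 := h.div_const (ε ^ k)
    have heq : (fun z : ℝ => ((ε * z) ^ k * Real.exp (-(ε * z))) / ε ^ k)
        = fun z : ℝ => z ^ k * Real.exp (-(ε * z)) := by
      funext z
      rw [mul_pow]
      field_simp
    rw [← heq]
    simpa [Function.comp] using h2
  have h := ((((key 2).div_const ε).add (((key 1).const_mul 2).div_const (ε ^ 2))).add
    (((key 0).const_mul 2).div_const (ε ^ 3))).neg
  have heq : (fun z : ℝ => -((z ^ 2 * Real.exp (-(ε * z)) / ε +
      2 * (z ^ 1 * Real.exp (-(ε * z))) / ε ^ 2) + 2 * (z ^ 0 * Real.exp (-(ε * z))) / ε ^ 3))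
      = fun z : ℝ => -Real.exp (-(ε * z)) * (z ^ 2 / ε + 2 * z / ε ^ 2 + 2 / ε ^ 3) := by
    funext z
    ring
  rw [← heq]
  simpa using h

theorem second_moment_truncated_laplace (N ε : ℝ) (hN : 0 ≤ N) (hε : 0 < ε) :
    (∫ z : ℝ, (max 0 z) ^ 2 * laplaceDensity ε N z) =
      1 / ε ^ 2 * (ε ^ 2 * N ^ 2 + 2 - Real.exp (-ε * N)) := by
  have hε' : ε ≠ 0 := hε.ne'
  set f : ℝ → ℝ := fun z => (max 0 z) ^ 2 * laplaceDensity ε N z with hf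
  have hf_cont : Continuous f := by
    rw [hf]
    unfold laplaceDensity
    fun_prop
  -- integral of z^2 exp(-εz) on Ioi N
  have hB : ∫ z in Ioi N, z ^ 2 * Real.exp (-(ε * z))
      = 0 - (-Real.exp (-(ε * N)) * (N ^ 2 / ε + 2 * N / ε ^ 2 + 2 / ε ^ 3)) := by
    apply integral_Ioi_of_hasDerivAt_of_nonneg' (fun x _ => deriv_aux2 ε hε' x)
    · intro x _
      positivity
    · exact tendsto_aux ε hε
  have hB_int : IntegrableOn (fun z : ℝ => z ^ 2 * Real.exp (-(ε * z))) (Ioi N) := by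
    apply integrableOn_Ioi_deriv_of_nonneg' (fun x _ => deriv_aux2 ε hε' x)
    · intro x _
      positivity
    · exact tendsto_aux ε hε
  -- f on Ioi N
  have hfIoiEq : EqOn f (fun z => ε / 2 * Real.exp (ε * N) * (z ^ 2 * Real.exp (-(ε * z))))
      (Ioi N) := by
    intro z hz
    have hz' : (0 : ℝ) < z := lt_of_le_of_lt hN hz
    have habs : |z - N| = z - N := abs_of_nonneg (by linarith [hz.out])
    simp only [hf, laplaceDensity, habs, max_eq_right hz'.le]
    rw [show -ε * (z - N) = ε * N + -(ε * z) by ring, Real.exp_add]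
    ring
  have hf_int_IoiN : IntegrableOn f (Ioi N) := by
    have h1 : IntegrableOn (fun z => ε / 2 * Real.exp (ε * N) * (z ^ 2 * Real.exp (-(ε * z))))
        (Ioi N) := hB_int.const_mul _
    exact h1.congr_fun (fun z hz => (hfIoiEq hz).symm) measurableSet_Ioi
  have hf_IoiN : ∫ z in Ioi N, f z
      = ε / 2 * Real.exp (ε * N) * (Real.exp (-(ε * N)) * (N ^ 2 / ε + 2 * N / ε ^ 2 + 2 / ε ^ 3)) := by
    rw [setIntegral_congr_fun measurableSet_Ioi hfIoiEq, integral_const_mul, hB]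
    ring
  -- f on Ioc 0 N
  have hA : ∫ z in (0:ℝ)..N, z ^ 2 * Real.exp (ε * z)
      = Real.exp (ε * N) * (N ^ 2 / ε - 2 * N / ε ^ 2 + 2 / ε ^ 3)
        - Real.exp (ε * 0) * (0 ^ 2 / ε - 2 * 0 / ε ^ 2 + 2 / ε ^ 3) := by
    apply intervalIntegral.integral_eq_sub_of_hasDerivAt (fun x _ => deriv_aux1 ε hε' x)
    exact (Continuous.intervalIntegrable (by fun_prop) 0 N)
  have hfIocEq : EqOn f (fun z => ε / 2 * Real.exp (-(ε * N)) * (z ^ 2 * Real.exp (ε * z)))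
      (Ioc 0 N) := by
    intro z hz
    have habs : |z - N| = -(z - N) := abs_of_nonpos (by linarith [hz.2])
    simp only [hf, laplaceDensity, habs, max_eq_right hz.1.le]
    rw [show -ε * -(z - N) = -(ε * N) + ε * z by ring, Real.exp_add]
    ring
  have hf_int_Ioc : IntegrableOn f (Ioc 0 N) :=
    (hf_cont.integrableOn_Icc).mono_set Ioc_subset_Icc_self
  have hf_Ioc : ∫ z in Ioc 0 N, f z
      = ε / 2 * Real.exp (-(ε * N)) *
        (Real.exp (ε * N) * (N ^ 2 / ε - 2 * N / ε ^ 2 + 2 / ε ^ 3) - 2 / ε ^ 3) := by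
    rw [setIntegral_congr_fun measurableSet_Ioc hfIocEq, integral_const_mul,
      ← intervalIntegral.integral_of_le hN, hA]
    simp [Real.exp_zero]
  -- f vanishes on Iic 0
  have hfIic : EqOn f (fun _ => (0:ℝ)) (Iic 0) := by
    intro z hz
    simp [hf, max_eq_left hz.out]
  have hf_int_Iic : IntegrableOn f (Iic 0) :=
    (integrableOn_zero).congr_fun (fun z hz => (hfIic hz).symm) measurableSet_Iic
  have hf_Iic : ∫ z in Iic 0, f z = 0 := by
    rw [setIntegral_congr_fun measurableSet_Iic hfIic]
    simp
  -- assemble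
  have hunion : Ioc 0 N ∪ Ioi N = Ioi (0:ℝ) := Ioc_union_Ioi_eq_Ioi hN
  have hf_int_Ioi0 : IntegrableOn f (Ioi 0) := by
    rw [← hunion]
    exact hf_int_Ioc.union hf_int_IoiN
  have hsplit0 : ∫ z : ℝ, f z = (∫ z in Iic 0, f z) + ∫ z in Ioi 0, f z :=
    (intervalIntegral.integral_Iic_add_Ioi hf_int_Iic hf_int_Ioi0).symm
  have hsplit1 : ∫ z in Ioi (0:ℝ), f z = (∫ z in Ioc 0 N, f z) + ∫ z in Ioi N, f z := by
    rw [← hunion]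
    exact setIntegral_union (Ioc_disjoint_Ioi le_rfl) measurableSet_Ioi hf_int_Ioc hf_int_IoiN
  have hE : Real.exp (-(ε * N)) * Real.exp (ε * N) = 1 := by
    rw [← Real.exp_add]; simp
  have hneg : (-ε * N) = -(ε * N) := by ring
  rw [show (∫ z : ℝ, (max 0 z) ^ 2 * laplaceDensity ε N z) = ∫ z : ℝ, f z from rfl,
    hsplit0, hf_Iic, hsplit1, hf_Ioc, hf_IoiN, hneg]
  simp only [Real.exp_neg]
  field_simp
  ring
end

section
/- Let N ≥ 0 and ε > 0, and let Z be Laplace-distributed with location N and scale 1/ε. Then the mean squared error E[(max(0,Z) − N)²] equals (1/ε²)·(2 − exp(−εN)) − (N/ε)·exp(−εN). -/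
open Real MeasureTheory

theorem mse_truncated_laplace (N ε : ℝ) (hN : 0 ≤ N) (hε : 0 < ε) :
    (∫ z : ℝ, (max 0 z - N) ^ 2 * laplaceDensity ε N z) =
      1 / ε ^ 2 * (2 - Real.exp (-ε * N)) - N / ε * Real.exp (-ε * N) := by
  have hε' : ε ≠ 0 := ne_of_gt hε
  set f : ℝ → ℝ := fun z => (max 0 z - N) ^ 2 * laplaceDensity ε N z with hfdef
  -- basic derivative of the linear map
  have hlin : ∀ z : ℝ, HasDerivAt (fun z : ℝ => ε * (z - N)) ε z := fun z => by
    simpa using ((hasDerivAt_id z).sub_const N).const_mul ε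
  have hlin' : ∀ z : ℝ, HasDerivAt (fun z : ℝ => -(ε * (z - N))) (-ε) z := fun z =>
    (hlin z).neg
  -- ### piece on Iic 0
  have hIic_eq : Set.EqOn f (fun z => N ^ 2 * (ε / 2) * Real.exp (ε * (z - N))) (Set.Iic 0) := by
    intro z hz
    have hz' : z ≤ 0 := hz
    simp only [f, laplaceDensity, max_eq_left hz']
    rw [abs_of_nonpos (by linarith), show -ε * -(z - N) = ε * (z - N) by ring]
    ring
  have hexpint : IntegrableOn (fun z => Real.exp (ε * z)) (Set.Iic (0:ℝ)) := by
    have h0 : Integrable ((Set.Iic (0:ℝ)).indicator Real.exp) :=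
      (integrable_indicator_iff measurableSet_Iic).2 (integrableOn_exp_Iic 0)
    have h1 := h0.comp_mul_left' hε'
    rw [← integrable_indicator_iff measurableSet_Iic]
    refine h1.congr (Filter.Eventually.of_forall fun x => ?_)
    have hiff : ε * x ≤ 0 ↔ x ≤ 0 := by
      constructor <;> intro h <;> nlinarith
    simp [Set.indicator_apply, Set.mem_Iic, hiff]
  have hAint : IntegrableOn (fun z => N ^ 2 * (ε / 2) * Real.exp (ε * (z - N)))
      (Set.Iic (0:ℝ)) := by
    have h2 := hexpint.const_mul (N ^ 2 * (ε / 2) * Real.exp (-(ε * N)))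
    refine IntegrableOn.congr_fun h2 (fun z _ => ?_) measurableSet_Iic
    rw [mul_assoc, ← Real.exp_add, show -(ε * N) + ε * z = ε * (z - N) by ring]
  have hFderiv : ∀ z ∈ Set.Iic (0:ℝ), HasDerivAt (fun z => N ^ 2 / 2 * Real.exp (ε * (z - N)))
      (N ^ 2 * (ε / 2) * Real.exp (ε * (z - N))) z := by
    intro z _
    have := ((hlin z).exp).const_mul (N ^ 2 / 2)
    refine this.congr_deriv ?_
    ring
  have hFtend : Filter.Tendsto (fun z => N ^ 2 / 2 * Real.exp (ε * (z - N)))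
      Filter.atBot (nhds 0) := by
    have h1 : Filter.Tendsto (fun z : ℝ => ε * (z - N)) Filter.atBot Filter.atBot := by
      apply Filter.Tendsto.const_mul_atBot hε
      exact Filter.tendsto_atBot_add_const_right _ _ Filter.tendsto_id
    have h2 := Real.tendsto_exp_atBot.comp h1
    have := h2.const_mul (N ^ 2 / 2)
    simpa using this
  have hA : ∫ z in Set.Iic (0:ℝ), f z = N ^ 2 / 2 * Real.exp (-(ε * N)) := by
    rw [setIntegral_congr_fun measurableSet_Iic hIic_eq,
      integral_Iic_of_hasDerivAt_of_tendsto' hFderiv hAint hFtend]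
    rw [show ε * ((0:ℝ) - N) = -(ε * N) by ring]
    ring
  -- ### piece on Ioc 0 N
  have hmid_eq : Set.EqOn f (fun z => (z - N) ^ 2 * (ε / 2) * Real.exp (ε * (z - N)))
      (Set.Ioc 0 N) := by
    intro z hz
    simp only [f, laplaceDensity, max_eq_right hz.1.le]
    rw [abs_of_nonpos (by linarith [hz.2]), show -ε * -(z - N) = ε * (z - N) by ring]
    ring
  have hGderiv : ∀ z ∈ Set.uIcc (0:ℝ) N, HasDerivAt
      (fun z => Real.exp (ε * (z - N)) * ((z - N) ^ 2 / 2 - (z - N) / ε + 1 / ε ^ 2))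
      ((z - N) ^ 2 * (ε / 2) * Real.exp (ε * (z - N))) z := by
    intro z _
    have hb : HasDerivAt (fun z : ℝ => z - N) 1 z := (hasDerivAt_id z).sub_const N
    have hp : HasDerivAt (fun z : ℝ => (z - N) ^ 2 / 2 - (z - N) / ε + 1 / ε ^ 2)
        ((z - N) - 1 / ε) z := by
      have := (((hb.pow 2).div_const 2).sub (hb.div_const ε)).add_const (1 / ε ^ 2)
      refine this.congr_deriv ?_
      simp
    have := ((hlin z).exp).mul hp
    refine this.congr_deriv ?_
    field_simp
    ring
  have hcont : Continuous (fun z : ℝ => (z - N) ^ 2 * (ε / 2) * Real.exp (ε * (z - N))) := by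
    fun_prop
  have hB : ∫ z in Set.Ioc (0:ℝ) N, f z
      = 1 / ε ^ 2 - Real.exp (-(ε * N)) * (N ^ 2 / 2 + N / ε + 1 / ε ^ 2) := by
    rw [setIntegral_congr_fun measurableSet_Ioc hmid_eq, ← intervalIntegral.integral_of_le hN,
      intervalIntegral.integral_eq_sub_of_hasDerivAt hGderiv
        (hcont.intervalIntegrable 0 N)]
    rw [show ε * (N - N) = (0:ℝ) by ring, show ε * ((0:ℝ) - N) = -(ε * N) by ring]
    simp
    ring
  -- ### piece on Ioi N
  have hIoi_eq : Set.EqOn f (fun z => (z - N) ^ 2 * (ε / 2) * Real.exp (-(ε * (z - N))))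
      (Set.Ioi N) := by
    intro z hz
    have hz' : N < z := hz
    simp only [f, laplaceDensity, max_eq_right (le_trans hN hz'.le)]
    rw [abs_of_nonneg (by linarith), show -ε * (z - N) = -(ε * (z - N)) by ring]
    ring
  have hHderiv : ∀ z ∈ Set.Ici N, HasDerivAt
      (fun z => -(Real.exp (-(ε * (z - N))) * ((z - N) ^ 2 / 2 + (z - N) / ε + 1 / ε ^ 2)))
      ((z - N) ^ 2 * (ε / 2) * Real.exp (-(ε * (z - N)))) z := by
    intro z _
    have hb : HasDerivAt (fun z : ℝ => z - N) 1 z := (hasDerivAt_id z).sub_const N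
    have hp : HasDerivAt (fun z : ℝ => (z - N) ^ 2 / 2 + (z - N) / ε + 1 / ε ^ 2)
        ((z - N) + 1 / ε) z := by
      have := (((hb.pow 2).div_const 2).add (hb.div_const ε)).add_const (1 / ε ^ 2)
      refine this.congr_deriv ?_
      simp
    have := (((hlin' z).exp).mul hp).neg
    refine this.congr_deriv ?_
    field_simp
    ring
  have hHnonneg : ∀ z ∈ Set.Ioi N,
      0 ≤ (z - N) ^ 2 * (ε / 2) * Real.exp (-(ε * (z - N))) := by
    intro z _
    positivity
  have hk : ∀ k : ℕ, Filter.Tendsto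
      (fun z : ℝ => (z - N) ^ k * Real.exp (-(ε * (z - N)))) Filter.atTop (nhds 0) := by
    intro k
    have h0 := tendsto_rpow_mul_exp_neg_mul_atTop_nhds_zero k ε hε
    have h1 : Filter.Tendsto (fun z : ℝ => z - N) Filter.atTop Filter.atTop :=
      Filter.tendsto_atTop_add_const_right _ _ Filter.tendsto_id
    refine (h0.comp h1).congr fun z => ?_
    simp [Function.comp, Real.rpow_natCast, neg_mul]
  have hHtend : Filter.Tendsto
      (fun z => -(Real.exp (-(ε * (z - N))) * ((z - N) ^ 2 / 2 + (z - N) / ε + 1 / ε ^ 2)))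
      Filter.atTop (nhds 0) := by
    have h2 := ((((hk 2).div_const 2).add ((hk 1).div_const ε)).add
      ((hk 0).div_const (ε ^ 2))).neg
    rw [show -((0:ℝ) / 2 + 0 / ε + 0 / ε ^ 2) = 0 by ring] at h2
    exact h2.congr fun z => by ring
  have hC : ∫ z in Set.Ioi N, f z = 1 / ε ^ 2 := by
    rw [setIntegral_congr_fun measurableSet_Ioi hIoi_eq,
      integral_Ioi_of_hasDerivAt_of_nonneg' hHderiv hHnonneg hHtend]
    rw [show ε * (N - N) = (0:ℝ) by ring]
    simp
  -- ### integrability of f on the pieces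
  have hf_Iic : IntegrableOn f (Set.Iic (0:ℝ)) :=
    hAint.congr_fun (fun z hz => (hIic_eq hz).symm) measurableSet_Iic
  have hfC : Continuous f := by
    simp only [hfdef, laplaceDensity]
    fun_prop
  have hf_Ioc : IntegrableOn f (Set.Ioc (0:ℝ) N) := hfC.integrableOn_Ioc
  have hf_IoiN : IntegrableOn f (Set.Ioi N) := by
    have h0 := integrableOn_Ioi_deriv_of_nonneg' hHderiv hHnonneg hHtend
    exact h0.congr_fun (fun z hz => (hIoi_eq hz).symm) measurableSet_Ioi
  have hf_Ioi : IntegrableOn f (Set.Ioi (0:ℝ)) := by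
    rw [← Set.Ioc_union_Ioi_eq_Ioi hN]
    exact hf_Ioc.union hf_IoiN
  -- ### assemble
  have hsplit2 : ∫ z in Set.Ioi (0:ℝ), f z
      = (∫ z in Set.Ioc (0:ℝ) N, f z) + ∫ z in Set.Ioi N, f z := by
    rw [← Set.Ioc_union_Ioi_eq_Ioi hN,
      setIntegral_union (Set.Ioc_disjoint_Ioi le_rfl) measurableSet_Ioi hf_Ioc hf_IoiN]
  have htot : (∫ z : ℝ, f z) = (∫ z in Set.Iic (0:ℝ), f z) + ∫ z in Set.Ioi (0:ℝ), f z :=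
    (intervalIntegral.integral_Iic_add_Ioi hf_Iic hf_Ioi).symm
  calc (∫ z : ℝ, f z)
      = N ^ 2 / 2 * Real.exp (-(ε * N))
        + (1 / ε ^ 2 - Real.exp (-(ε * N)) * (N ^ 2 / 2 + N / ε + 1 / ε ^ 2) + 1 / ε ^ 2) := by
        rw [htot, hA, hsplit2, hB, hC]
    _ = 1 / ε ^ 2 * (2 - Real.exp (-ε * N)) - N / ε * Real.exp (-ε * N) := by
        rw [show -ε * N = -(ε * N) by ring]
        field_simp
        ring
end

section
/- For any fixed N > 0, the function f(ε) = (1/ε²)·(2 − exp(−εN)) − (N/ε)·exp(−εN) is strictly convex on (0, ∞), i.e., its second derivative is strictly positive for all ε > 0. -/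
open Real

private noncomputable def Fmse (N ε : ℝ) : ℝ :=
  1 / ε ^ 2 * (2 - Real.exp (-ε * N)) - N / ε * Real.exp (-ε * N)

private noncomputable def Fmse1 (N ε : ℝ) : ℝ :=
  -4 / ε ^ 3 + (2 / ε ^ 3 + 2 * N / ε ^ 2 + N ^ 2 / ε) * Real.exp (-ε * N)

private noncomputable def Fmse2 (N ε : ℝ) : ℝ :=
  12 / ε ^ 4 - (6 / ε ^ 4 + 6 * N / ε ^ 3 + 3 * N ^ 2 / ε ^ 2 + N ^ 3 / ε) * Real.exp (-ε * N)

private lemma hexp_deriv (N ε : ℝ) :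
    HasDerivAt (fun ε : ℝ => Real.exp (-ε * N)) (Real.exp (-ε * N) * -N) ε := by
  have h : HasDerivAt (fun ε : ℝ => -ε * N) (-N) ε := by
    simpa using (hasDerivAt_id ε).neg.mul_const N
  simpa using h.exp

private lemma hF1 (N ε : ℝ) (hε : ε ≠ 0) : HasDerivAt (Fmse N) (Fmse1 N ε) ε := by
  have h1 : HasDerivAt (fun ε : ℝ => 1 / ε ^ 2)
      ((0 * ε ^ 2 - 1 * (↑2 * ε ^ (2 - 1))) / (ε ^ 2) ^ 2) ε :=
    (hasDerivAt_const ε (1 : ℝ)).div (hasDerivAt_pow 2 ε) (pow_ne_zero 2 hε)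
  have h2 : HasDerivAt (fun ε : ℝ => 2 - Real.exp (-ε * N)) (0 - Real.exp (-ε * N) * -N) ε :=
    (hasDerivAt_const ε (2 : ℝ)).sub (hexp_deriv N ε)
  have h3 : HasDerivAt (fun ε : ℝ => N / ε) ((0 * ε - N * 1) / ε ^ 2) ε :=
    (hasDerivAt_const ε N).div (hasDerivAt_id ε) hε
  have h := (h1.mul h2).sub (h3.mul (hexp_deriv N ε))
  refine h.congr_deriv ?_
  unfold Fmse1
  have hε2 : ε ^ 2 ≠ 0 := pow_ne_zero 2 hε
  field_simp
  ring

private lemma hF2 (N ε : ℝ) (hε : ε ≠ 0) : HasDerivAt (Fmse1 N) (Fmse2 N ε) ε := by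
  have h1 : HasDerivAt (fun ε : ℝ => -4 / ε ^ 3)
      ((0 * ε ^ 3 - -4 * (↑3 * ε ^ (3 - 1))) / (ε ^ 3) ^ 2) ε :=
    (hasDerivAt_const ε (-4 : ℝ)).div (hasDerivAt_pow 3 ε) (pow_ne_zero 3 hε)
  have h2a : HasDerivAt (fun ε : ℝ => 2 / ε ^ 3)
      ((0 * ε ^ 3 - 2 * (↑3 * ε ^ (3 - 1))) / (ε ^ 3) ^ 2) ε :=
    (hasDerivAt_const ε (2 : ℝ)).div (hasDerivAt_pow 3 ε) (pow_ne_zero 3 hε)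
  have h2b : HasDerivAt (fun ε : ℝ => 2 * N / ε ^ 2)
      ((0 * ε ^ 2 - 2 * N * (↑2 * ε ^ (2 - 1))) / (ε ^ 2) ^ 2) ε :=
    (hasDerivAt_const ε (2 * N)).div (hasDerivAt_pow 2 ε) (pow_ne_zero 2 hε)
  have h2c : HasDerivAt (fun ε : ℝ => N ^ 2 / ε)
      ((0 * ε - N ^ 2 * 1) / ε ^ 2) ε :=
    (hasDerivAt_const ε (N ^ 2)).div (hasDerivAt_id ε) hε
  have h := h1.add (((h2a.add h2b).add h2c).mul (hexp_deriv N ε))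
  refine h.congr_deriv ?_
  unfold Fmse2
  simp only [Pi.add_apply]
  field_simp
  ring

private lemma F2_pos (N ε : ℝ) (hN : 0 < N) (hε : 0 < ε) : 0 < Fmse2 N ε := by
  set x := ε * N with hx
  have hx0 : 0 < x := mul_pos hε hN
  have hsum : 6 + 6 * x + 3 * x ^ 2 + x ^ 3 ≤ 6 * Real.exp x := by
    have h := Real.sum_le_exp_of_nonneg hx0.le 4
    simp [Finset.sum_range_succ, Nat.factorial] at h
    nlinarith
  have h6 : (6 + 6 * x + 3 * x ^ 2 + x ^ 3) * Real.exp (-x) ≤ 6 := by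
    have hpos : (0 : ℝ) < Real.exp (-x) := Real.exp_pos _
    have := mul_le_mul_of_nonneg_right hsum hpos.le
    rwa [mul_assoc, ← Real.exp_add, add_neg_cancel, Real.exp_zero, mul_one] at this
  have hrw : Fmse2 N ε = (12 - (6 + 6 * x + 3 * x ^ 2 + x ^ 3) * Real.exp (-x)) / ε ^ 4 := by
    unfold Fmse2
    rw [hx]
    have : -ε * N = -(ε * N) := by ring
    rw [this]
    field_simp
  rw [hrw]
  apply div_pos
  · nlinarith
  · positivity

theorem mse_strictConvex_in_eps (N : ℝ) (hN : 0 < N) :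
    StrictConvexOn ℝ (Set.Ioi (0 : ℝ))
      (fun ε : ℝ => 1 / ε ^ 2 * (2 - Real.exp (-ε * N)) - N / ε * Real.exp (-ε * N)) ∧
    ∀ ε : ℝ, 0 < ε →
      0 < iteratedDeriv 2
        (fun ε : ℝ => 1 / ε ^ 2 * (2 - Real.exp (-ε * N)) - N / ε * Real.exp (-ε * N)) ε := by
  have key : ∀ ε : ℝ, 0 < ε → deriv (deriv (Fmse N)) ε = Fmse2 N ε := by
    intro ε hε
    have hEq : deriv (Fmse N) =ᶠ[nhds ε] Fmse1 N := by
      filter_upwards [eventually_ne_nhds hε.ne'] with x hx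
      exact (hF1 N x hx).deriv
    rw [hEq.deriv_eq]
    exact (hF2 N ε hε.ne').deriv
  have h2pos : ∀ ε : ℝ, 0 < ε → 0 < deriv (deriv (Fmse N)) ε := by
    intro ε hε
    rw [key ε hε]
    exact F2_pos N ε hN hε
  constructor
  · refine strictConvexOn_of_deriv2_pos (convex_Ioi 0) ?_ ?_
    · intro x hx
      exact (hF1 N x (ne_of_gt hx)).continuousAt.continuousWithinAt
    · intro x hx
      rw [interior_Ioi] at hx
      show 0 < deriv^[2] (Fmse N) x
      rw [Function.iterate_succ_apply', Function.iterate_one]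
      exact h2pos x hx
  · intro ε hε
    rw [iteratedDeriv_succ, iteratedDeriv_one]
    exact h2pos ε hε
end
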